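/- Let n be a sequence with l-bounded gaps. If a basis B is Δ-n-symmetric for largest coefficients, then B is C-symmetric for largest coefficients (i.e. the property holds for all cardinalities, n = ℕ) with C ≤ max{1 + 2α₁α₂n₁, 1 + 2Δ²(1 + l)}. -/

import Mathlib

open Finset


lemma fresh_set (Z : Finset ℕ) (n : ℕ) :
    ∃ D : Finset ℕ, D.card = n ∧ Disjoint D Z := by
  refine ⟨(Finset.range n).image (fun i => i + (Z.sup id + 1)), ?_, ?_⟩
  · rw [Finset.card_image_of_injective _ (fun a b h => by omega)]
    exact Finset.card_range n
  · rw [Finset.disjoint_left]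
    intro a ha haZ
    simp only [Finset.mem_image, Finset.mem_range] at ha
    obtain ⟨i, _, rfl⟩ := ha
    have := Finset.le_sup (f := id) haZ
    simp only [id] at this
    omega

lemma split_sum {X : Type*} [NormedAddCommGroup X] (g : ℕ → X) (K : ℝ) (hK : 0 ≤ K) (n : ℕ) :
    ∀ (m : ℕ) (S : Finset ℕ), S.card ≤ m * n →
      (∀ C ⊆ S, C.card ≤ n → ‖∑ i ∈ C, g i‖ ≤ K) → ‖∑ i ∈ S, g i‖ ≤ (m : ℝ) * K := by
  intro m
  induction m with
  | zero =>
      intro S hS hC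
      have : S = ∅ := Finset.card_eq_zero.mp (by omega)
      simp [this]
  | succ m ih =>
      intro S hS hC
      by_cases h : S.card ≤ n
      · have h1 := hC S Finset.Subset.rfl h
        have : (1:ℝ) ≤ (m:ℝ) + 1 := by have := Nat.cast_nonneg (α := ℝ) m; linarith
        calc ‖∑ i ∈ S, g i‖ ≤ K := h1
          _ ≤ ((m:ℕ)+1 : ℝ) * K := by nlinarith
          _ = ((m+1 : ℕ) : ℝ) * K := by push_cast; ring
      · push_neg at h
        obtain ⟨C, hCS, hCcard⟩ := Finset.exists_subset_card_eq h.le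
        have hsum := Finset.sum_sdiff (f := g) hCS
        have h1 : ‖∑ i ∈ S \ C, g i‖ ≤ (m : ℝ) * K := by
          apply ih
          · rw [Finset.card_sdiff_of_subset hCS, hCcard]
            have h2 : (m+1)*n = m*n + n := by ring
            omega
          · exact fun C' hC' hc' => hC C' (hC'.trans Finset.sdiff_subset) hc'
        calc ‖∑ i ∈ S, g i‖ = ‖∑ i ∈ S \ C, g i + ∑ i ∈ C, g i‖ := by rw [hsum]
          _ ≤ ‖∑ i ∈ S \ C, g i‖ + ‖∑ i ∈ C, g i‖ := norm_add_le _ _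
          _ ≤ (m : ℝ) * K + K := add_le_add h1 (hC C hCS hCcard.le)
          _ = ((m+1 : ℕ) : ℝ) * K := by push_cast; ring

lemma coef_sum {X : Type*} [NormedAddCommGroup X] [NormedSpace ℝ X]
    (e : ℕ → X) (f : ℕ → X →L[ℝ] ℝ)
    (hbi : ∀ i j, f i (e j) = if i = j then (1 : ℝ) else 0)
    (S : Finset ℕ) (c : ℕ → ℝ) (j : ℕ) :
    f j (∑ i ∈ S, c i • e i) = if j ∈ S then c j else 0 := by
  rw [map_sum]
  simp only [map_smul, hbi, smul_eq_mul, mul_ite, mul_one, mul_zero]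
  exact Finset.sum_ite_eq S j c

lemma norm_sum_le_card {X : Type*} [NormedAddCommGroup X] [NormedSpace ℝ X]
    (e : ℕ → X) (α₁ : ℝ) (hα₁ : ∀ i, ‖e i‖ ≤ α₁) (hα₁0 : 0 ≤ α₁)
    (S : Finset ℕ) (c : ℕ → ℝ) (hc : ∀ i ∈ S, |c i| ≤ 1) :
    ‖∑ i ∈ S, c i • e i‖ ≤ α₁ * S.card := by
  calc ‖∑ i ∈ S, c i • e i‖ ≤ ∑ i ∈ S, ‖c i • e i‖ := norm_sum_le _ _
    _ ≤ ∑ _i ∈ S, α₁ := by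
        refine Finset.sum_le_sum (fun i hi => ?_)
        rw [norm_smul, Real.norm_eq_abs]
        calc |c i| * ‖e i‖ ≤ 1 * α₁ := by
              apply mul_le_mul (hc i hi) (hα₁ i) (norm_nonneg _) zero_le_one
          _ = α₁ := one_mul _
    _ = α₁ * S.card := by rw [Finset.sum_const, nsmul_eq_mul, mul_comm]


lemma fresh_set' (Z : Finset ℕ) (n : ℕ) :
    ∃ D : Finset ℕ, D.card = n ∧ Disjoint D Z := by
  refine ⟨(Finset.range n).image (fun i => i + (Z.sup id + 1)), ?_, ?_⟩
  · rw [Finset.card_image_of_injective _ (fun a b h => by omega)]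
    exact Finset.card_range n
  · rw [Finset.disjoint_left]
    intro a ha haZ
    simp only [Finset.mem_image, Finset.mem_range] at ha
    obtain ⟨i, _, rfl⟩ := ha
    have := Finset.le_sup (f := id) haZ
    simp only [id] at this
    omega

lemma coef_sum' {X : Type*} [NormedAddCommGroup X] [NormedSpace ℝ X]
    (e : ℕ → X) (f : ℕ → X →L[ℝ] ℝ)
    (hbi : ∀ i j, f i (e j) = if i = j then (1 : ℝ) else 0)
    (S : Finset ℕ) (c : ℕ → ℝ) (j : ℕ) :
    f j (∑ i ∈ S, c i • e i) = if j ∈ S then c j else 0 := by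
  rw [map_sum]
  simp only [map_smul, hbi, smul_eq_mul, mul_ite, mul_one, mul_zero]
  exact Finset.sum_ite_eq S j c

lemma split_sum' {X : Type*} [NormedAddCommGroup X] (g : ℕ → X) (K : ℝ) (hK : 0 ≤ K) (n : ℕ) :
    ∀ (m : ℕ) (S : Finset ℕ), S.card ≤ m * n →
      (∀ C ⊆ S, C.card ≤ n → ‖∑ i ∈ C, g i‖ ≤ K) → ‖∑ i ∈ S, g i‖ ≤ (m : ℝ) * K := by
  intro m
  induction m with
  | zero =>
      intro S hS hC
      have : S = ∅ := Finset.card_eq_zero.mp (by omega)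
      simp [this]
  | succ m ih =>
      intro S hS hC
      by_cases h : S.card ≤ n
      · have h1 := hC S Finset.Subset.rfl h
        have : (0:ℝ) ≤ (m:ℝ) := Nat.cast_nonneg m
        calc ‖∑ i ∈ S, g i‖ ≤ K := h1
          _ ≤ ((m+1 : ℕ) : ℝ) * K := by push_cast; nlinarith
      · push_neg at h
        obtain ⟨C, hCS, hCcard⟩ := Finset.exists_subset_card_eq h.le
        have hsum := Finset.sum_sdiff (f := g) hCS
        have h1 : ‖∑ i ∈ S \ C, g i‖ ≤ (m : ℝ) * K := by
          apply ih
          · rw [Finset.card_sdiff_of_subset hCS, hCcard]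
            have h2 : (m+1)*n = m*n + n := by ring
            omega
          · exact fun C' hC' hc' => hC C' (hC'.trans Finset.sdiff_subset) hc'
        calc ‖∑ i ∈ S, g i‖ = ‖∑ i ∈ S \ C, g i + ∑ i ∈ C, g i‖ := by rw [hsum]
          _ ≤ ‖∑ i ∈ S \ C, g i‖ + ‖∑ i ∈ C, g i‖ := norm_add_le _ _
          _ ≤ (m : ℝ) * K + K := add_le_add h1 (hC C hCS hCcard.le)
          _ = ((m+1 : ℕ) : ℝ) * K := by push_cast; ring

lemma core_caseII
    {X : Type*} [NormedAddCommGroup X] [NormedSpace ℝ X]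
    (e : ℕ → X) (f : ℕ → X →L[ℝ] ℝ)
    (hbi : ∀ i j, f i (e j) = if i = j then (1 : ℝ) else 0)
    (nseq : ℕ → ℕ) (l : ℕ) (Δ : ℝ) (hΔ : 0 < Δ)
    (hslc : ∀ (A B : Finset ℕ) (εA εB : ℕ → ℝ) (x : X),
      A.card ≤ B.card → (∃ k, A.card = nseq k) → (∃ k, B.card = nseq k) →
      Disjoint A B →
      (∀ i ∈ A, |εA i| = 1) → (∀ i ∈ B, |εB i| = 1) →
      (∀ i, |f i x| ≤ 1) → (∀ i ∈ A ∪ B, f i x = 0) →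
      ‖x + ∑ i ∈ A, εA i • e i‖ ≤ Δ * ‖x + ∑ i ∈ B, εB i • e i‖)
    (k : ℕ)
    (A B : Finset ℕ) (εA εB : ℕ → ℝ) (x : X)
    (hAB : A.card ≤ B.card) (hBk : nseq k ≤ B.card) (hBl : B.card ≤ l * nseq k)
    (hdisj : Disjoint A B)
    (hεA : ∀ i ∈ A, |εA i| = 1) (hεB : ∀ i ∈ B, |εB i| = 1)
    (hx1 : ∀ i, |f i x| ≤ 1) (hx0 : ∀ i ∈ A ∪ B, f i x = 0)
    (Sx : Finset ℕ) (hSx : ∀ i ∉ Sx, f i x = 0) :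
    ‖x + ∑ i ∈ A, εA i • e i‖ ≤
      (1 + 2 * Δ ^ 2 * (1 + (l : ℝ))) * ‖x + ∑ i ∈ B, εB i • e i‖ := by
  set nk := nseq k with hnk
  set y := x + ∑ i ∈ B, εB i • e i with hy
  have hy0 : 0 ≤ ‖y‖ := norm_nonneg _
  have hΔ2y : 0 ≤ Δ ^ 2 * ‖y‖ := by positivity
  -- key: any small signed sum inside A ∪ B is dominated by Δ² ‖y‖
  have key : ∀ (C : Finset ℕ) (σ : ℕ → ℝ), C ⊆ A ∪ B → C.card ≤ nk →
      (∀ i ∈ C, |σ i| = 1) → ‖∑ i ∈ C, σ i • e i‖ ≤ Δ ^ 2 * ‖y‖ := by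
    intro C σ hCAB hCcard hσ
    obtain ⟨T, hTC, hTB, hTcard⟩ := Finset.exists_subsuperset_card_eq
      (Finset.inter_subset_right (s₁ := C) (s₂ := B))
      ((Finset.card_le_card (Finset.inter_subset_left)).trans hCcard) hBk
    obtain ⟨F, hFcard, hFdisj⟩ := fresh_set' (A ∪ B ∪ Sx) nk
    obtain ⟨D, hDcard, hDdisj⟩ := fresh_set' (A ∪ B ∪ Sx ∪ F) (nk - C.card)
    have hF_fact : ∀ a ∈ F, a ∉ A ∪ B ∧ a ∉ Sx := by
      intro a ha
      have := Finset.disjoint_left.mp hFdisj ha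
      simp only [Finset.mem_union] at this ⊢
      tauto
    have hD_fact : ∀ a ∈ D, a ∉ A ∪ B ∧ a ∉ Sx ∧ a ∉ F := by
      intro a ha
      have := Finset.disjoint_left.mp hDdisj ha
      simp only [Finset.mem_union] at this ⊢
      tauto
    have hCD : Disjoint C D := Finset.disjoint_left.mpr
      (fun a haC haD => (hD_fact a haD).1 (hCAB haC))
    set G := C ∪ D with hG
    have hGcard : G.card = nk := by
      rw [hG, Finset.card_union_of_disjoint hCD, hDcard]
      omega
    have hGF : Disjoint G F := by
      rw [hG, Finset.disjoint_union_left]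
      constructor
      · exact Finset.disjoint_left.mpr (fun a haC haF => (hF_fact a haF).1 (hCAB haC))
      · exact Finset.disjoint_left.mpr (fun a haD haF => (hD_fact a haD).2.2 haF)
    have hFT : Disjoint F T := Finset.disjoint_left.mpr
      (fun a haF haT => (hF_fact a haF).1 (Finset.mem_union_right _ (hTB haT)))
    set u := x + ∑ i ∈ B \ T, εB i • e i with hu
    have hucoef : ∀ j, f j u = f j x + (if j ∈ B \ T then εB j else 0) := by
      intro j
      rw [hu, map_add, coef_sum' e f hbi]
    have hu1 : ∀ j, |f j u| ≤ 1 := by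
      intro j
      rw [hucoef]
      by_cases hj : j ∈ B \ T
      · rw [if_pos hj, hx0 j (Finset.mem_union_right _ (Finset.mem_sdiff.mp hj).1), zero_add]
        exact (hεB j (Finset.mem_sdiff.mp hj).1).le
      · rw [if_neg hj, add_zero]
        exact hx1 j
    have huC : ∀ j ∈ C, f j u = 0 := by
      intro j hj
      rw [hucoef, hx0 j (hCAB hj), zero_add, if_neg, ]
      intro hjBT
      exact (Finset.mem_sdiff.mp hjBT).2 (hTC (Finset.mem_inter.mpr ⟨hj, (Finset.mem_sdiff.mp hjBT).1⟩))
    have huD : ∀ j ∈ D, f j u = 0 := by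
      intro j hj
      rw [hucoef, hSx j (hD_fact j hj).2.1, zero_add, if_neg]
      intro hjBT
      exact (hD_fact j hj).1 (Finset.mem_union_right _ (Finset.mem_sdiff.mp hjBT).1)
    have huF : ∀ j ∈ F, f j u = 0 := by
      intro j hj
      rw [hucoef, hSx j (hF_fact j hj).2, zero_add, if_neg]
      intro hjBT
      exact (hF_fact j hj).1 (Finset.mem_union_right _ (Finset.mem_sdiff.mp hjBT).1)
    have huT : ∀ j ∈ T, f j u = 0 := by
      intro j hj
      rw [hucoef, hx0 j (Finset.mem_union_right _ (hTB hj)), zero_add, if_neg]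
      intro hjBT
      exact (Finset.mem_sdiff.mp hjBT).2 hj
    have huG : ∀ j ∈ G, f j u = 0 := by
      intro j hj
      rcases Finset.mem_union.mp hj with h | h
      · exact huC j h
      · exact huD j h
    -- endpoint identities
    have hend : u + ∑ i ∈ T, εB i • e i = y := by
      rw [hu, hy, add_assoc, Finset.sum_sdiff hTB]
    have hendneg : -u + ∑ i ∈ T, (fun i => -εB i) i • e i = -y := by
      have h1 : ∑ i ∈ T, (fun i => -εB i) i • e i = -∑ i ∈ T, εB i • e i := by
        simp [neg_smul]
      rw [h1, ← neg_add, hend]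
    -- the generic hop
    have hop : ∀ (w : X) (S T' : Finset ℕ) (σ' τ : ℕ → ℝ), S.card = nk → T'.card = nk →
        Disjoint S T' → (∀ i ∈ S, |σ' i| = 1) → (∀ i ∈ T', |τ i| = 1) →
        (∀ i, |f i w| ≤ 1) → (∀ i ∈ S ∪ T', f i w = 0) →
        ‖w + ∑ i ∈ S, σ' i • e i‖ ≤ Δ * ‖w + ∑ i ∈ T', τ i • e i‖ := by
      intro w S T' σ' τ hS hT' hd hσ' hτ hw1 hw0
      exact hslc S T' σ' τ w (by rw [hS, hT']) ⟨k, hS⟩ ⟨k, hT'⟩ hd hσ' hτ hw1 hw0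
    -- sign patterns
    set σp : ℕ → ℝ := fun i => if i ∈ C then σ i else 1 with hσpdef
    set σm : ℕ → ℝ := fun i => if i ∈ C then σ i else -1 with hσmdef
    set one : ℕ → ℝ := fun _ => 1 with honedef
    have hσp : ∀ i ∈ G, |σp i| = 1 := by
      intro i _
      by_cases h : i ∈ C
      · rw [hσpdef]; simp only [if_pos h]; exact hσ i h
      · rw [hσpdef]; simp [h]
    have hσm : ∀ i ∈ G, |σm i| = 1 := by
      intro i _
      by_cases h : i ∈ C
      · rw [hσmdef]; simp only [if_pos h]; exact hσ i h
      · rw [hσmdef]; simp [h]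
    have hone : ∀ i ∈ F, |one i| = 1 := by intro i _; simp [honedef]
    have hεBT : ∀ i ∈ T, |εB i| = 1 := fun i hi => hεB i (hTB hi)
    have hnεBT : ∀ i ∈ T, |(fun i => -εB i) i| = 1 := by
      intro i hi
      simp only [abs_neg]
      exact hεB i (hTB hi)
    -- sum decompositions over G
    set p := ∑ i ∈ C, σ i • e i with hp
    set q := ∑ i ∈ D, (1:ℝ) • e i with hq
    have hGp : ∑ i ∈ G, σp i • e i = p + q := by
      rw [hG, Finset.sum_union hCD, hp, hq]
      congr 1
      · exact Finset.sum_congr rfl (fun i hi => by rw [hσpdef]; simp [if_pos hi])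
      · refine Finset.sum_congr rfl (fun i hi => ?_)
        rw [hσpdef]
        simp [Finset.disjoint_right.mp hCD hi]
    have hGm : ∑ i ∈ G, σm i • e i = p - q := by
      rw [hG, Finset.sum_union hCD, hp, hq]
      rw [sub_eq_add_neg, ← Finset.sum_neg_distrib]
      congr 1
      · exact Finset.sum_congr rfl (fun i hi => by rw [hσmdef]; simp [if_pos hi])
      · refine Finset.sum_congr rfl (fun i hi => ?_)
        rw [hσmdef]
        simp [Finset.disjoint_right.mp hCD hi]
    -- negatives
    have hu1n : ∀ j, |f j (-u)| ≤ 1 := by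
      intro j
      rw [map_neg, abs_neg]
      exact hu1 j
    -- terminal hops (to T, landing on ±y)
    have hFp : ‖u + ∑ i ∈ F, one i • e i‖ ≤ Δ * ‖y‖ := by
      have h := hop u F T one εB hFcard hTcard hFT hone hεBT hu1
        (fun i hi => by rcases Finset.mem_union.mp hi with h | h; exacts [huF i h, huT i h])
      rw [hend] at h
      exact h
    have hFm : ‖-u + ∑ i ∈ F, one i • e i‖ ≤ Δ * ‖y‖ := by
      have h := hop (-u) F T one (fun i => -εB i) hFcard hTcard hFT hone hnεBT hu1n
        (fun i hi => by
          rw [map_neg, neg_eq_zero]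
          rcases Finset.mem_union.mp hi with h | h
          exacts [huF i h, huT i h])
      rw [hendneg, norm_neg] at h
      exact h
    -- middle hops (from G to F)
    have hu0GF : ∀ i ∈ G ∪ F, f i u = 0 := by
      intro i hi
      rcases Finset.mem_union.mp hi with h | h
      exacts [huG i h, huF i h]
    have hu0GFn : ∀ i ∈ G ∪ F, f i (-u) = 0 := by
      intro i hi
      rw [map_neg, neg_eq_zero]
      exact hu0GF i hi
    have hb1 : ‖u + (p + q)‖ ≤ Δ ^ 2 * ‖y‖ := by
      have h := hop u G F σp one hGcard hFcard hGF hσp hone hu1 hu0GF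
      rw [hGp] at h
      calc ‖u + (p + q)‖ ≤ Δ * ‖u + ∑ i ∈ F, one i • e i‖ := h
        _ ≤ Δ * (Δ * ‖y‖) := mul_le_mul_of_nonneg_left hFp hΔ.le
        _ = Δ ^ 2 * ‖y‖ := by ring
    have hb2 : ‖u + (p - q)‖ ≤ Δ ^ 2 * ‖y‖ := by
      have h := hop u G F σm one hGcard hFcard hGF hσm hone hu1 hu0GF
      rw [hGm] at h
      calc ‖u + (p - q)‖ ≤ Δ * ‖u + ∑ i ∈ F, one i • e i‖ := h
        _ ≤ Δ * (Δ * ‖y‖) := mul_le_mul_of_nonneg_left hFp hΔ.le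
        _ = Δ ^ 2 * ‖y‖ := by ring
    have hb3 : ‖-u + (p + q)‖ ≤ Δ ^ 2 * ‖y‖ := by
      have h := hop (-u) G F σp one hGcard hFcard hGF hσp hone hu1n hu0GFn
      rw [hGp] at h
      calc ‖-u + (p + q)‖ ≤ Δ * ‖-u + ∑ i ∈ F, one i • e i‖ := h
        _ ≤ Δ * (Δ * ‖y‖) := mul_le_mul_of_nonneg_left hFm hΔ.le
        _ = Δ ^ 2 * ‖y‖ := by ring
    have hb4 : ‖-u + (p - q)‖ ≤ Δ ^ 2 * ‖y‖ := by
      have h := hop (-u) G F σm one hGcard hFcard hGF hσm hone hu1n hu0GFn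
      rw [hGm] at h
      calc ‖-u + (p - q)‖ ≤ Δ * ‖-u + ∑ i ∈ F, one i • e i‖ := h
        _ ≤ Δ * (Δ * ‖y‖) := mul_le_mul_of_nonneg_left hFm hΔ.le
        _ = Δ ^ 2 * ‖y‖ := by ring
    -- midpoint combinations
    have mid : ∀ a b c : X, a + a = b + c → ‖b‖ ≤ Δ ^ 2 * ‖y‖ → ‖c‖ ≤ Δ ^ 2 * ‖y‖ →
        ‖a‖ ≤ Δ ^ 2 * ‖y‖ := by
      intro a b c habc hb hc
      have h1 : ‖a + a‖ ≤ ‖b‖ + ‖c‖ := habc ▸ norm_add_le b c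
      have h2 : ‖a + a‖ = 2 * ‖a‖ := by
        rw [← two_smul ℝ a, norm_smul]
        norm_num
      linarith
    have m1 : ‖u + p‖ ≤ Δ ^ 2 * ‖y‖ :=
      mid _ _ _ (by abel : (u + p) + (u + p) = (u + (p + q)) + (u + (p - q))) hb1 hb2
    have m2 : ‖-u + p‖ ≤ Δ ^ 2 * ‖y‖ :=
      mid _ _ _ (by abel : (-u + p) + (-u + p) = (-u + (p + q)) + (-u + (p - q))) hb3 hb4
    exact mid p (u + p) (-u + p) (by abel) m1 m2
  -- split A and B into ≤ l pieces of size ≤ nk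
  have hA' : ‖∑ i ∈ A, εA i • e i‖ ≤ (l : ℝ) * (Δ ^ 2 * ‖y‖) :=
    split_sum' (fun i => εA i • e i) _ hΔ2y nk l A (hAB.trans hBl)
      (fun C hC hc => key C εA (hC.trans Finset.subset_union_left) hc
        (fun i hi => hεA i (hC hi)))
  have hB' : ‖∑ i ∈ B, εB i • e i‖ ≤ (l : ℝ) * (Δ ^ 2 * ‖y‖) :=
    split_sum' (fun i => εB i • e i) _ hΔ2y nk l B hBl
      (fun C hC hc => key C εB (hC.trans Finset.subset_union_right) hc
        (fun i hi => hεB i (hC hi)))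
  have decomp : x + ∑ i ∈ A, εA i • e i
      = y + ((∑ i ∈ A, εA i • e i) - (∑ i ∈ B, εB i • e i)) := by
    rw [hy]; abel
  have hl0 : (0:ℝ) ≤ (l:ℝ) := Nat.cast_nonneg l
  calc ‖x + ∑ i ∈ A, εA i • e i‖
      = ‖y + ((∑ i ∈ A, εA i • e i) - (∑ i ∈ B, εB i • e i))‖ := by rw [decomp]
    _ ≤ ‖y‖ + ‖(∑ i ∈ A, εA i • e i) - (∑ i ∈ B, εB i • e i)‖ := norm_add_le _ _
    _ ≤ ‖y‖ + (‖∑ i ∈ A, εA i • e i‖ + ‖∑ i ∈ B, εB i • e i‖) := by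
        have := norm_sub_le (∑ i ∈ A, εA i • e i) (∑ i ∈ B, εB i • e i)
        linarith
    _ ≤ ‖y‖ + ((l : ℝ) * (Δ ^ 2 * ‖y‖) + (l : ℝ) * (Δ ^ 2 * ‖y‖)) := by linarith
    _ ≤ (1 + 2 * Δ ^ 2 * (1 + (l : ℝ))) * ‖y‖ := by nlinarith [sq_nonneg Δ]


lemma coef_sum'' {X : Type*} [NormedAddCommGroup X] [NormedSpace ℝ X]
    (e : ℕ → X) (f : ℕ → X →L[ℝ] ℝ)
    (hbi : ∀ i j, f i (e j) = if i = j then (1 : ℝ) else 0)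
    (S : Finset ℕ) (c : ℕ → ℝ) (j : ℕ) :
    f j (∑ i ∈ S, c i • e i) = if j ∈ S then c j else 0 := by
  rw [map_sum]
  simp only [map_smul, hbi, smul_eq_mul, mul_ite, mul_one, mul_zero]
  exact Finset.sum_ite_eq S j c

lemma approx_lemma
    {X : Type*} [NormedAddCommGroup X] [NormedSpace ℝ X]
    (e : ℕ → X) (f : ℕ → X →L[ℝ] ℝ)
    (hbi : ∀ i j, f i (e j) = if i = j then (1 : ℝ) else 0)
    (α₁ α₂ : ℝ) (hα₁pos : 0 < α₁) (hα₂pos : 0 < α₂)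
    (hα₁ : ∀ i, ‖e i‖ ≤ α₁) (hα₂ : ∀ i, ‖f i‖ ≤ α₂)
    (hdense : Dense (↑(Submodule.span ℝ (Set.range e)) : Set X))
    (E : Finset ℕ) (x : X)
    (hx1 : ∀ i, |f i x| ≤ 1) (hx0 : ∀ i ∈ E, f i x = 0)
    (η : ℝ) (hη : 0 < η) :
    ∃ x' : X, ‖x - x'‖ ≤ η ∧ (∀ i, |f i x'| ≤ 1) ∧ (∀ i ∈ E, f i x' = 0) ∧
      ∃ S : Finset ℕ, ∀ i ∉ S, f i x' = 0 := by
  have hfd : ∀ (j : ℕ) (a : X), |f j a| ≤ α₂ * ‖a‖ := by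
    intro j a
    calc |f j a| = ‖f j a‖ := (Real.norm_eq_abs _).symm
      _ ≤ ‖f j‖ * ‖a‖ := (f j).le_opNorm a
      _ ≤ α₂ * ‖a‖ := mul_le_mul_of_nonneg_right (hα₂ j) (norm_nonneg a)
  set K : ℝ := 1 + α₁ * α₂ * E.card with hK
  have hKpos : 0 < K := by positivity
  set c : ℝ := 1 + α₂ * (‖x‖ + 1) with hc
  have hcpos : 0 < c := by positivity
  set t : ℝ := min 1 (η / (2 * c)) with ht
  have htpos : 0 < t := lt_min one_pos (by positivity)
  have ht1 : t ≤ 1 := min_le_left _ _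
  have ht2 : t ≤ η / (2 * c) := min_le_right _ _
  set δ : ℝ := t / K with hδ
  have hδpos : 0 < δ := by positivity
  obtain ⟨v, hvmem, hvdist⟩ := hdense.exists_dist_lt x hδpos
  have hxv : ‖x - v‖ ≤ δ := by rw [← dist_eq_norm]; exact hvdist.le
  rw [SetLike.mem_coe] at hvmem
  obtain ⟨co, hco⟩ := Finsupp.mem_span_range_iff_exists_finsupp.mp hvmem
  have hvco : ∑ i ∈ co.support, co i • e i = v := hco
  set w : X := v - ∑ i ∈ E, (f i v) • e i with hw
  have hwcoef : ∀ j, f j w = f j v - (if j ∈ E then f j v else 0) := by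
    intro j
    rw [hw, map_sub, coef_sum'' e f hbi]
  have hwE : ∀ j ∈ E, f j w = 0 := by intro j hj; rw [hwcoef, if_pos hj, sub_self]
  have hwoff : ∀ j, j ∉ E → f j w = f j v := by intro j hj; rw [hwcoef, if_neg hj, sub_zero]
  have hvE : ∀ i ∈ E, |f i v| ≤ α₂ * δ := by
    intro i hi
    have h1 : f i v = -(f i (x - v)) := by rw [map_sub, hx0 i hi]; ring
    rw [h1, abs_neg]
    exact (hfd i _).trans (mul_le_mul_of_nonneg_left hxv hα₂pos.le)
  have hxw : ‖x - w‖ ≤ t := by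
    have h1 : x - w = (x - v) + ∑ i ∈ E, (f i v) • e i := by rw [hw]; abel
    have h2 : ‖∑ i ∈ E, (f i v) • e i‖ ≤ ∑ _i ∈ E, α₁ * (α₂ * δ) := by
      calc ‖∑ i ∈ E, (f i v) • e i‖ ≤ ∑ i ∈ E, ‖(f i v) • e i‖ := norm_sum_le _ _
        _ ≤ ∑ _i ∈ E, α₁ * (α₂ * δ) := by
            refine Finset.sum_le_sum (fun i hi => ?_)
            rw [norm_smul, Real.norm_eq_abs]
            calc |f i v| * ‖e i‖ ≤ (α₂ * δ) * α₁ :=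
                mul_le_mul (hvE i hi) (hα₁ i) (norm_nonneg _) (by positivity)
              _ = α₁ * (α₂ * δ) := by ring
    rw [Finset.sum_const, nsmul_eq_mul] at h2
    calc ‖x - w‖ ≤ ‖x - v‖ + ‖∑ i ∈ E, (f i v) • e i‖ := by
          rw [h1]; exact norm_add_le _ _
      _ ≤ δ + E.card * (α₁ * (α₂ * δ)) := add_le_add hxv h2
      _ = δ * K := by rw [hK]; ring
      _ = t := by rw [hδ]; field_simp
  have hw1 : ∀ j, |f j w| ≤ 1 + α₂ * t := by
    intro j
    by_cases hj : j ∈ E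
    · rw [hwE j hj]
      simp only [abs_zero]
      positivity
    · have h1 : f j w = f j x + f j (w - x) := by rw [map_sub (f j) w x]; ring
      calc |f j w| ≤ |f j x| + |f j (w - x)| := by rw [h1]; exact abs_add_le _ _
        _ ≤ 1 + α₂ * ‖w - x‖ := add_le_add (hx1 j) (hfd j _)
        _ ≤ 1 + α₂ * t := by
            have : ‖w - x‖ ≤ t := by rw [norm_sub_rev]; exact hxw
            nlinarith
  set ρ : ℝ := 1 + α₂ * t with hρ
  have hρ1 : 1 ≤ ρ := by nlinarith
  have hρpos : 0 < ρ := by linarith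
  have hρinv : ρ * ρ⁻¹ = 1 := mul_inv_cancel₀ hρpos.ne'
  refine ⟨ρ⁻¹ • w, ?_, ?_, ?_, ⟨co.support ∪ E, ?_⟩⟩
  · -- distance bound
    have hw_norm : ‖w‖ ≤ ‖x‖ + t := by
      have h1 : w = x - (x - w) := by abel
      calc ‖w‖ = ‖x - (x - w)‖ := by rw [← h1]
        _ ≤ ‖x‖ + ‖x - w‖ := norm_sub_le _ _
        _ ≤ ‖x‖ + t := by linarith
    have hinv : 1 - ρ⁻¹ ≤ α₂ * t := by nlinarith
    have hinv0 : 0 ≤ 1 - ρ⁻¹ := by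
      have : ρ⁻¹ ≤ 1 := by
        rw [inv_le_one_iff₀]
        right; exact hρ1
      linarith
    have h2 : ‖w - ρ⁻¹ • w‖ = (1 - ρ⁻¹) * ‖w‖ := by
      have h3 : w - ρ⁻¹ • w = (1 - ρ⁻¹) • w := by
        rw [sub_smul, one_smul]
      rw [h3, norm_smul, Real.norm_eq_abs, abs_of_nonneg hinv0]
    calc ‖x - ρ⁻¹ • w‖ ≤ ‖x - w‖ + ‖w - ρ⁻¹ • w‖ := by
          have h4 : x - ρ⁻¹ • w = (x - w) + (w - ρ⁻¹ • w) := by abel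
          rw [h4]; exact norm_add_le _ _
      _ ≤ t + (1 - ρ⁻¹) * ‖w‖ := by rw [h2]; linarith
      _ ≤ t + (α₂ * t) * (‖x‖ + 1) := by
          have := mul_le_mul hinv (by linarith : ‖w‖ ≤ ‖x‖ + 1) (norm_nonneg w)
            (by positivity : (0:ℝ) ≤ α₂ * t)
          linarith
      _ = t * c := by rw [hc]; ring
      _ ≤ (η / (2 * c)) * c := mul_le_mul_of_nonneg_right ht2 hcpos.le
      _ = η / 2 := by field_simp
      _ ≤ η := by linarith
  · intro i
    rw [map_smul, smul_eq_mul, abs_mul, abs_inv, abs_of_pos hρpos]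
    have h5 : |f i w| ≤ ρ := hw1 i
    calc ρ⁻¹ * |f i w| ≤ ρ⁻¹ * ρ := by
          exact mul_le_mul_of_nonneg_left h5 (inv_nonneg.mpr hρpos.le)
      _ = 1 := by rw [mul_comm]; exact hρinv
  · intro i hi
    rw [map_smul, smul_eq_mul, hwE i hi, mul_zero]
  · intro i hi
    simp only [Finset.mem_union, not_or] at hi
    rw [map_smul, smul_eq_mul, hwoff i hi.2, ← hvco, coef_sum'' e f hbi, if_neg hi.1, mul_zero]

/-- For a sequence with `l`-bounded gaps, `Δ`-`n`-symmetry for largest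
coefficients implies symmetry for largest coefficients (for all cardinalities) with
constant `max (1 + 2α₁α₂n₁) (1 + 2Δ²(1+l))`. -/
theorem stmt5
    {X : Type*} [NormedAddCommGroup X] [NormedSpace ℝ X]
    (e : ℕ → X) (f : ℕ → X →L[ℝ] ℝ)
    (hbi : ∀ i j, f i (e j) = if i = j then (1 : ℝ) else 0)
    (α₁ α₂ : ℝ) (hα₁pos : 0 < α₁) (hα₂pos : 0 < α₂)
    (hα₁ : ∀ i, ‖e i‖ ≤ α₁) (hα₂ : ∀ i, ‖f i‖ ≤ α₂)
    (hdense : Dense (↑(Submodule.span ℝ (Set.range e)) : Set X))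
    (nseq : ℕ → ℕ) (hmono : StrictMono nseq) (hn1 : 0 < nseq 0)
    (l : ℕ) (hl : 2 ≤ l) (hgaps : ∀ k, nseq (k + 1) ≤ l * nseq k)
    (Δ : ℝ) (hΔ : 0 < Δ)
    (hslc : ∀ (A B : Finset ℕ) (εA εB : ℕ → ℝ) (x : X),
      A.card ≤ B.card → (∃ k, A.card = nseq k) → (∃ k, B.card = nseq k) →
      Disjoint A B →
      (∀ i ∈ A, |εA i| = 1) → (∀ i ∈ B, |εB i| = 1) →
      (∀ i, |f i x| ≤ 1) → (∀ i ∈ A ∪ B, f i x = 0) →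
      ‖x + ∑ i ∈ A, εA i • e i‖ ≤ Δ * ‖x + ∑ i ∈ B, εB i • e i‖) :
    ∀ (A B : Finset ℕ) (εA εB : ℕ → ℝ) (x : X),
      A.card ≤ B.card → Disjoint A B →
      (∀ i ∈ A, |εA i| = 1) → (∀ i ∈ B, |εB i| = 1) →
      (∀ i, |f i x| ≤ 1) → (∀ i ∈ A ∪ B, f i x = 0) →
      ‖x + ∑ i ∈ A, εA i • e i‖ ≤
        max (1 + 2 * α₁ * α₂ * (nseq 0 : ℝ)) (1 + 2 * Δ ^ 2 * (1 + (l : ℝ))) *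
          ‖x + ∑ i ∈ B, εB i • e i‖ := by
  intro A B εA εB x hAB hdisj hεA hεB hx1 hx0
  have hfd : ∀ (j : ℕ) (a : X), |f j a| ≤ α₂ * ‖a‖ := by
    intro j a
    calc |f j a| = ‖f j a‖ := (Real.norm_eq_abs _).symm
      _ ≤ ‖f j‖ * ‖a‖ := (f j).le_opNorm a
      _ ≤ α₂ * ‖a‖ := mul_le_mul_of_nonneg_right (hα₂ j) (norm_nonneg a)
  set y := x + ∑ i ∈ B, εB i • e i with hy
  have hy0 : 0 ≤ ‖y‖ := norm_nonneg _
  have hn0 : (0:ℝ) ≤ (nseq 0 : ℝ) := Nat.cast_nonneg _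
  by_cases hM : B.card < nseq 0
  · -- CASE I : small B
    have hmax : (1 + 2 * α₁ * α₂ * (nseq 0 : ℝ)) ≤
        max (1 + 2 * α₁ * α₂ * (nseq 0 : ℝ)) (1 + 2 * Δ ^ 2 * (1 + (l : ℝ))) :=
      le_max_left _ _
    rcases Finset.eq_empty_or_nonempty B with hB | hBne
    · have hA0 : A = ∅ := by
        rw [hB] at hAB
        exact Finset.card_eq_zero.mp (by simpa using hAB)
      have hyx : y = x := by rw [hy, hB]; simp
      rw [hA0]
      simp only [Finset.sum_empty, add_zero]
      rw [hyx]
      have h1 : (1:ℝ) ≤ max (1 + 2 * α₁ * α₂ * (nseq 0 : ℝ)) (1 + 2 * Δ ^ 2 * (1 + (l : ℝ))) := by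
        refine le_trans ?_ hmax
        have : (0:ℝ) ≤ 2 * α₁ * α₂ * (nseq 0 : ℝ) := by positivity
        linarith
      nlinarith [norm_nonneg x]
    · obtain ⟨b, hb⟩ := hBne
      have hyb : f b y = εB b := by
        rw [hy, map_add, coef_sum'' e f hbi, if_pos hb,
          hx0 b (Finset.mem_union_right _ hb), zero_add]
      have h1 : 1 ≤ α₂ * ‖y‖ := by
        have h2 := hfd b y
        rw [hyb, hεB b hb] at h2
        exact h2
      have hAn : ‖∑ i ∈ A, εA i • e i‖ ≤ α₁ * A.card :=
        norm_sum_le_card e α₁ hα₁ hα₁pos.le A εA (fun i hi => (hεA i hi).le)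
      have hBn : ‖∑ i ∈ B, εB i • e i‖ ≤ α₁ * B.card :=
        norm_sum_le_card e α₁ hα₁ hα₁pos.le B εB (fun i hi => (hεB i hi).le)
      have hBcard : (B.card : ℝ) ≤ (nseq 0 : ℝ) := Nat.cast_le.mpr hM.le
      have hAcard : (A.card : ℝ) ≤ (nseq 0 : ℝ) :=
        le_trans (Nat.cast_le.mpr hAB) hBcard
      have decomp : x + ∑ i ∈ A, εA i • e i
          = y + ((∑ i ∈ A, εA i • e i) - (∑ i ∈ B, εB i • e i)) := by rw [hy]; abel
      have step : ‖x + ∑ i ∈ A, εA i • e i‖ ≤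
          (1 + 2 * α₁ * α₂ * (nseq 0 : ℝ)) * ‖y‖ := by
        calc ‖x + ∑ i ∈ A, εA i • e i‖
            = ‖y + ((∑ i ∈ A, εA i • e i) - (∑ i ∈ B, εB i • e i))‖ := by rw [decomp]
          _ ≤ ‖y‖ + ‖(∑ i ∈ A, εA i • e i) - (∑ i ∈ B, εB i • e i)‖ := norm_add_le _ _
          _ ≤ ‖y‖ + (‖∑ i ∈ A, εA i • e i‖ + ‖∑ i ∈ B, εB i • e i‖) := by
              have := norm_sub_le (∑ i ∈ A, εA i • e i) (∑ i ∈ B, εB i • e i)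
              linarith
          _ ≤ ‖y‖ + (α₁ * (nseq 0 : ℝ) + α₁ * (nseq 0 : ℝ)) := by nlinarith
          _ ≤ (1 + 2 * α₁ * α₂ * (nseq 0 : ℝ)) * ‖y‖ := by
              have h6 : 2 * α₁ * (nseq 0 : ℝ) * 1 ≤ 2 * α₁ * (nseq 0 : ℝ) * (α₂ * ‖y‖) :=
                mul_le_mul_of_nonneg_left h1 (by positivity)
              nlinarith
      exact le_trans step (mul_le_mul_of_nonneg_right hmax hy0)
  · -- CASE II : large B
    push_neg at hM
    obtain ⟨k, hk1, hk2⟩ : ∃ k, nseq k ≤ B.card ∧ B.card < nseq (k + 1) := by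
      refine ⟨Nat.findGreatest (fun j => nseq j ≤ B.card) B.card,
        Nat.findGreatest_spec (P := fun j => nseq j ≤ B.card) (Nat.zero_le _) hM, ?_⟩
      by_cases h : Nat.findGreatest (fun j => nseq j ≤ B.card) B.card + 1 ≤ B.card
      · have h4 := Nat.findGreatest_is_greatest (P := fun j => nseq j ≤ B.card)
          (n := B.card) (k := Nat.findGreatest (fun j => nseq j ≤ B.card) B.card + 1)
          (Nat.lt_succ_self _) h
        exact not_le.mp h4
      · exact (not_le.mp h).trans_le hmono.le_apply
    have hkl : B.card ≤ l * nseq k := le_trans hk2.le (hgaps k)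
    have main : ‖x + ∑ i ∈ A, εA i • e i‖ ≤ (1 + 2 * Δ ^ 2 * (1 + (l : ℝ))) * ‖y‖ := by
      set CII : ℝ := 1 + 2 * Δ ^ 2 * (1 + (l : ℝ)) with hCII
      have hCIIpos : 0 < CII := by positivity
      refine le_of_forall_pos_le_add (fun ε hε => ?_)
      set η : ℝ := ε / (CII + 1) with hη
      have hηpos : 0 < η := by positivity
      obtain ⟨x', hx'near, hx'1, hx'0, Sx, hSx⟩ := approx_lemma e f hbi α₁ α₂ hα₁pos hα₂pos
        hα₁ hα₂ hdense (A ∪ B) x hx1 hx0 η hηpos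
      have hcore := core_caseII e f hbi nseq l Δ hΔ hslc k A B εA εB x' hAB hk1 hkl hdisj
        hεA hεB hx'1 hx'0 Sx hSx
      rw [← hCII] at hcore
      have e1 : ‖x + ∑ i ∈ A, εA i • e i‖ ≤ ‖x' + ∑ i ∈ A, εA i • e i‖ + η := by
        have h5 : x + ∑ i ∈ A, εA i • e i = (x' + ∑ i ∈ A, εA i • e i) + (x - x') := by abel
        calc ‖x + ∑ i ∈ A, εA i • e i‖
            ≤ ‖x' + ∑ i ∈ A, εA i • e i‖ + ‖x - x'‖ := by rw [h5]; exact norm_add_le _ _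
          _ ≤ ‖x' + ∑ i ∈ A, εA i • e i‖ + η := by linarith
      have e2 : ‖x' + ∑ i ∈ B, εB i • e i‖ ≤ ‖y‖ + η := by
        have h5 : x' + ∑ i ∈ B, εB i • e i = y + (x' - x) := by rw [hy]; abel
        calc ‖x' + ∑ i ∈ B, εB i • e i‖ ≤ ‖y‖ + ‖x' - x‖ := by
              rw [h5]; exact norm_add_le _ _
          _ ≤ ‖y‖ + η := by rw [norm_sub_rev]; linarith
      have e3 : CII * ‖x' + ∑ i ∈ B, εB i • e i‖ ≤ CII * (‖y‖ + η) :=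
        mul_le_mul_of_nonneg_left e2 hCIIpos.le
      have e4 : CII * η + η = ε := by
        rw [hη]; field_simp
      calc ‖x + ∑ i ∈ A, εA i • e i‖ ≤ ‖x' + ∑ i ∈ A, εA i • e i‖ + η := e1
        _ ≤ CII * ‖x' + ∑ i ∈ B, εB i • e i‖ + η := by linarith
        _ ≤ CII * (‖y‖ + η) + η := by linarith
        _ = CII * ‖y‖ + ε := by rw [← e4]; ring
    exact le_trans main (mul_le_mul_of_nonneg_right (le_max_right _ _) hy0)
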